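/- Let f be a saturated n-ary polymorphism of (LO₂, LO₃) with no small 2-set, let x ∈ [n] be such that {x} is a 1-set of f, and let S be a 4-element 2-set of f with x ∈ S. Then for every z ∈ [n] with z ∉ S, the set {z, x} is a 1-set of f. -/

import Mathlib

open Finset

/-- A triple of naturals has a unique maximum entry. -/
def HasUniqueMax (a b c : ℕ) : Prop :=
  (b < a ∧ c < a) ∨ (a < b ∧ c < b) ∨ (a < c ∧ b < c)

/-- `f` is an `n`-ary polymorphism of (LO₂, LO₃): it maps subsets of `[n]` to `{0,1,2}`
and sends every partition of `[n]` into three (possibly empty) parts to a triple with a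
unique maximum. -/
def IsLOPoly (n : ℕ) (f : Finset (Fin n) → ℕ) : Prop :=
  (∀ X, f X ≤ 2) ∧
  ∀ X Y Z : Finset (Fin n), Disjoint X Y → Disjoint X Z → Disjoint Y Z →
    X ∪ Y ∪ Z = Finset.univ → HasUniqueMax (f X) (f Y) (f Z)

/-- The function obtained from `f` by changing the value of `X` to `i`. -/
def LORecolour {n : ℕ} (f : Finset (Fin n) → ℕ) (X : Finset (Fin n)) (i : ℕ) :
    Finset (Fin n) → ℕ :=
  fun Y => if Y = X then i else f Y

/-- `X` is recolourable to `i` for `f`. -/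
def LORecolourableTo {n : ℕ} (f : Finset (Fin n) → ℕ) (X : Finset (Fin n)) (i : ℕ) : Prop :=
  i ≠ f X ∧ IsLOPoly n (LORecolour f X i)

/-- A boolean set is static if it is not recolourable to the opposite boolean value. -/
def LOStatic {n : ℕ} (f : Finset (Fin n) → ℕ) (X : Finset (Fin n)) : Prop :=
  (f X = 0 ∧ ¬ LORecolourableTo f X 1) ∨ (f X = 1 ∧ ¬ LORecolourableTo f X 0)

/-- `(X, Y, Z)` is a boolean partition of `[n]` for `f`. -/
def LOBoolPartition {n : ℕ} (f : Finset (Fin n) → ℕ) (X Y Z : Finset (Fin n)) : Prop :=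
  Disjoint X Y ∧ Disjoint X Z ∧ Disjoint Y Z ∧ X ∪ Y ∪ Z = Finset.univ ∧
    ({f X, f Y, f Z} : Set ℕ) = {0, 1}

/-- Every superset of a 2-set is a 2-set. -/
def LOUpwardsClosed {n : ℕ} (f : Finset (Fin n) → ℕ) : Prop :=
  ∀ X Y : Finset (Fin n), f X = 2 → X ⊆ Y → f Y = 2

/-- `f` is saturated: upwards closed and the complement of every boolean set is a 2-set. -/
def LOSaturated {n : ℕ} (f : Finset (Fin n) → ℕ) : Prop :=
  LOUpwardsClosed f ∧ ∀ X : Finset (Fin n), f X ≤ 1 → f Xᶜ = 2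

/-- One step of saturation: `g` is a polymorphism obtained from `f` by recolouring a
single boolean set of `f` to 2. -/
def LORecolourStep {n : ℕ} (f g : Finset (Fin n) → ℕ) : Prop :=
  IsLOPoly n g ∧ ∃ X, f X ≤ 1 ∧ g = LORecolour f X 2

/-- `g` is a saturation of `f`. -/
def IsLOSaturation {n : ℕ} (f g : Finset (Fin n) → ℕ) : Prop :=
  IsLOPoly n g ∧ LOSaturated g ∧ Relation.ReflTransGen LORecolourStep f g

/-- `f` has no small 2-set (a 2-set with at most 3 elements). -/
def LONoSmallTwoSet {n : ℕ} (f : Finset (Fin n) → ℕ) : Prop :=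
  ∀ X, f X = 2 → 4 ≤ X.card

/-- `g` is a pure saturation of `f`: a saturation with no small 2-set. -/
def IsLOPureSaturation {n : ℕ} (f g : Finset (Fin n) → ℕ) : Prop :=
  IsLOSaturation f g ∧ LONoSmallTwoSet g

/-- `M` is a minimal (under inclusion) 2-set of `f`. -/
def LOMinTwoSet {n : ℕ} (f : Finset (Fin n) → ℕ) (M : Finset (Fin n)) : Prop :=
  f M = 2 ∧ ∀ Y, Y ⊂ M → f Y ≠ 2

/-- `T_f`: the union of the minimal 2-sets of `f`. -/
def LOTSet {n : ℕ} (f : Finset (Fin n) → ℕ) : Set (Fin n) :=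
  {a | ∃ M, LOMinTwoSet f M ∧ a ∈ M}

/-- `f` is a recoloured projection with dictating variable `t`: every static boolean set
`S` satisfies `f S = 1` iff `t ∈ S` (and `f S = 0` otherwise). -/
def LORecolProj {n : ℕ} (f : Finset (Fin n) → ℕ) (t : Fin n) : Prop :=
  ∀ S, f S ≤ 1 → LOStatic f S → f S = if t ∈ S then 1 else 0

/-- The `π`-minor of `f`: `f^π (X) = f(π⁻¹(X))`. -/
def LOMinor {n m : ℕ} (f : Finset (Fin n) → ℕ) (π : Fin n → Fin m) :
    Finset (Fin m) → ℕ :=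
  fun X => f (Finset.univ.filter (fun a => π a ∈ X))

set_option maxHeartbeats 1000000 in
/-- For a saturated polymorphism with no small 2-set, if `{x}` is a 1-set and `S` is a
4-element 2-set containing `x`, then `{z, x}` is a 1-set for every `z ∉ S`. -/
theorem stmt17 (n : ℕ) (hn : 1 ≤ n) (f : Finset (Fin n) → ℕ) (hf : IsLOPoly n f)
    (hsat : LOSaturated f) (hns : LONoSmallTwoSet f)
    (x : Fin n) (hx : f {x} = 1)
    (S : Finset (Fin n)) (hS : f S = 2) (hScard : S.card = 4) (hxS : x ∈ S) :
    ∀ z : Fin n, z ∉ S → f ({z, x} : Finset (Fin n)) = 1 := by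
  intro z hzS
  -- get a,b,c
  have herase : (S.erase x).card = 3 := by
    rw [Finset.card_erase_of_mem hxS, hScard]
  obtain ⟨a, b, c, hab, hac, hbc, habc⟩ := Finset.card_eq_three.mp herase
  have hSins : S = insert x {a, b, c} := by
    rw [← habc, Finset.insert_erase hxS]
  have hxa : x ≠ a := by
    intro h; have : a ∈ S.erase x := by rw [habc]; simp
    rw [← h] at this; exact (Finset.notMem_erase x S) this
  have hxb : x ≠ b := by
    intro h; have : b ∈ S.erase x := by rw [habc]; simp
    rw [← h] at this; exact (Finset.notMem_erase x S) this
  have hxc : x ≠ c := by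
    intro h; have : c ∈ S.erase x := by rw [habc]; simp
    rw [← h] at this; exact (Finset.notMem_erase x S) this
  have hmemS : ∀ t : Fin n, t ∈ S ↔ (t = x ∨ t = a ∨ t = b ∨ t = c) := by
    intro t; rw [hSins]; simp
  have hzx : z ≠ x := fun h => hzS (by rw [h]; exact hxS)
  have hza : z ≠ a := fun h => hzS ((hmemS z).mpr (by tauto))
  have hzb : z ≠ b := fun h => hzS ((hmemS z).mpr (by tauto))
  have hzc : z ≠ c := fun h => hzS ((hmemS z).mpr (by tauto))
  -- no small 2-set helper
  have hsmall : ∀ X : Finset (Fin n), X.card ≤ 3 → f X ≠ 2 := by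
    intro X hcard h2
    have := hns X h2
    omega
  have hle2 := hf.1
  set W : Finset (Fin n) := (S ∪ {z})ᶜ with hW
  have hmemW : ∀ t : Fin n, t ∈ W ↔ (t ∉ S ∧ t ≠ z) := by
    intro t; simp [hW]; tauto
  -- card bounds
  have hcard_abc : ({a, b, c} : Finset (Fin n)).card ≤ 3 := by
    apply le_trans (Finset.card_insert_le _ _)
    have : ({b, c} : Finset (Fin n)).card ≤ 2 := by
      apply le_trans (Finset.card_insert_le _ _); simp
    omega
  have hcard_zx : ({z, x} : Finset (Fin n)).card ≤ 3 := by
    apply le_trans (Finset.card_insert_le _ _); simp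
  have hcard_xb : ({x, b} : Finset (Fin n)).card ≤ 3 := by
    apply le_trans (Finset.card_insert_le _ _); simp
  have hcard_ac : ({a, c} : Finset (Fin n)).card ≤ 3 := by
    apply le_trans (Finset.card_insert_le _ _); simp
  have hcard_zac : ({z, a, c} : Finset (Fin n)).card ≤ 3 := by
    apply le_trans (Finset.card_insert_le _ _)
    have : ({a, c} : Finset (Fin n)).card ≤ 2 := by
      apply le_trans (Finset.card_insert_le _ _); simp
    omega
  have hcard_zxb : ({z, x, b} : Finset (Fin n)).card ≤ 3 := by
    apply le_trans (Finset.card_insert_le _ _)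
    have : ({x, b} : Finset (Fin n)).card ≤ 2 := by
      apply le_trans (Finset.card_insert_le _ _); simp
    omega
  by_contra hgoal
  have hzx0 : f ({z, x} : Finset (Fin n)) = 0 := by
    have h2 := hsmall _ hcard_zx
    have := hle2 ({z, x} : Finset (Fin n))
    omega
  -- Step 1: f Sᶜ ≠ 2
  have hScomp_ne2 : f Sᶜ ≠ 2 := by
    have hum := hf.2 S Sᶜ ∅ (disjoint_compl_right) (Finset.disjoint_empty_right _)
      (Finset.disjoint_empty_right _) (by simp)
    intro h2
    have he := hle2 (∅ : Finset (Fin n))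
    rw [hS, h2] at hum
    unfold HasUniqueMax at hum
    omega
  -- Step 2: partition ({x}, {a,b,c}, Sᶜ)
  have hstep2 : f ({a, b, c} : Finset (Fin n)) = 0 ∧ f Sᶜ = 0 := by
    have hd1 : Disjoint ({x} : Finset (Fin n)) {a, b, c} := by
      simp [Finset.disjoint_left]; tauto
    have hd2 : Disjoint ({x} : Finset (Fin n)) Sᶜ := by
      simp [Finset.disjoint_left, hxS]
    have hd3 : Disjoint ({a, b, c} : Finset (Fin n)) Sᶜ := by
      simp only [Finset.disjoint_left, Finset.mem_insert, Finset.mem_singleton,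
        Finset.mem_compl, not_not]
      rintro t (rfl | rfl | rfl) <;> rw [hmemS] <;> tauto
    have hu : ({x} : Finset (Fin n)) ∪ {a, b, c} ∪ Sᶜ = Finset.univ := by
      apply Finset.eq_univ_iff_forall.mpr
      intro t
      simp only [Finset.mem_union, Finset.mem_insert, Finset.mem_singleton, Finset.mem_compl]
      by_cases ht : t ∈ S
      · rw [hmemS] at ht; tauto
      · tauto
    have hum := hf.2 _ _ _ hd1 hd2 hd3 hu
    have h1 := hsmall _ hcard_abc
    have h2 := hle2 ({a, b, c} : Finset (Fin n))
    have h3 := hle2 Sᶜ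
    rw [hx] at hum
    unfold HasUniqueMax at hum
    omega
  -- Step 3: f W = 1
  have hW_ne2 : f W ≠ 2 := by
    intro h2
    have : f Sᶜ = 2 := hsat.1 W Sᶜ h2 (by
      intro t ht; rw [hmemW] at ht; simp [ht.1])
    exact hScomp_ne2 this
  have hWval : f W = 1 := by
    have hd1 : Disjoint ({z, x} : Finset (Fin n)) {a, b, c} := by
      simp [Finset.disjoint_left]; tauto
    have hd2 : Disjoint ({z, x} : Finset (Fin n)) W := by
      simp only [Finset.disjoint_left, Finset.mem_insert, Finset.mem_singleton]
      rintro t (rfl | rfl) ht <;> rw [hmemW] at ht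
      · exact ht.2 rfl
      · exact ht.1 hxS
    have hd3 : Disjoint ({a, b, c} : Finset (Fin n)) W := by
      simp only [Finset.disjoint_left, Finset.mem_insert, Finset.mem_singleton]
      rintro t (rfl | rfl | rfl) ht <;> rw [hmemW] at ht <;>
        exact ht.1 ((hmemS _).mpr (by tauto))
    have hu : ({z, x} : Finset (Fin n)) ∪ {a, b, c} ∪ W = Finset.univ := by
      apply Finset.eq_univ_iff_forall.mpr
      intro t
      simp only [Finset.mem_union, Finset.mem_insert, Finset.mem_singleton, hmemW]
      by_cases ht : t ∈ S
      · rw [hmemS] at ht; tauto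
      · by_cases htz : t = z <;> tauto
    have hum := hf.2 _ _ _ hd1 hd2 hd3 hu
    rw [hzx0, hstep2.1] at hum
    unfold HasUniqueMax at hum
    have := hle2 W
    omega
  -- Step 4: f {x, b} = 0 via ({x,b}, {z,a,c}, W)
  have hxb0 : f ({x, b} : Finset (Fin n)) = 0 := by
    have hd1 : Disjoint ({x, b} : Finset (Fin n)) {z, a, c} := by
      rw [Finset.disjoint_left]
      intro t ht hm
      simp only [Finset.mem_insert, Finset.mem_singleton] at ht hm
      rcases ht with rfl | rfl <;> rcases hm with rfl | rfl | rfl <;> simp_all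
    have hd2 : Disjoint ({x, b} : Finset (Fin n)) W := by
      simp only [Finset.disjoint_left, Finset.mem_insert, Finset.mem_singleton]
      rintro t (rfl | rfl) ht <;> rw [hmemW] at ht <;>
        exact ht.1 ((hmemS _).mpr (by tauto))
    have hd3 : Disjoint ({z, a, c} : Finset (Fin n)) W := by
      simp only [Finset.disjoint_left, Finset.mem_insert, Finset.mem_singleton]
      rintro t (rfl | rfl | rfl) ht <;> rw [hmemW] at ht
      · exact ht.2 rfl
      · exact ht.1 ((hmemS _).mpr (by tauto))
      · exact ht.1 ((hmemS _).mpr (by tauto))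
    have hu : ({x, b} : Finset (Fin n)) ∪ {z, a, c} ∪ W = Finset.univ := by
      apply Finset.eq_univ_iff_forall.mpr
      intro t
      simp only [Finset.mem_union, Finset.mem_insert, Finset.mem_singleton, hmemW]
      by_cases ht : t ∈ S
      · rw [hmemS] at ht; tauto
      · by_cases htz : t = z <;> tauto
    have hum := hf.2 _ _ _ hd1 hd2 hd3 hu
    rw [hWval] at hum
    have h1 := hsmall _ hcard_xb
    have h2 := hsmall _ hcard_zac
    have h3 := hle2 ({x, b} : Finset (Fin n))
    have h4 := hle2 ({z, a, c} : Finset (Fin n))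
    unfold HasUniqueMax at hum
    omega
  -- Step 5: f {a, c} = 0 via ({z,x,b}, {a,c}, W)
  have hac0 : f ({a, c} : Finset (Fin n)) = 0 := by
    have hd1 : Disjoint ({z, x, b} : Finset (Fin n)) {a, c} := by
      rw [Finset.disjoint_left]
      intro t ht hm
      simp only [Finset.mem_insert, Finset.mem_singleton] at ht hm
      rcases ht with rfl | rfl | rfl <;> rcases hm with rfl | rfl <;> simp_all
    have hd2 : Disjoint ({z, x, b} : Finset (Fin n)) W := by
      simp only [Finset.disjoint_left, Finset.mem_insert, Finset.mem_singleton]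
      rintro t (rfl | rfl | rfl) ht <;> rw [hmemW] at ht
      · exact ht.2 rfl
      · exact ht.1 hxS
      · exact ht.1 ((hmemS _).mpr (by tauto))
    have hd3 : Disjoint ({a, c} : Finset (Fin n)) W := by
      simp only [Finset.disjoint_left, Finset.mem_insert, Finset.mem_singleton]
      rintro t (rfl | rfl) ht <;> rw [hmemW] at ht <;>
        exact ht.1 ((hmemS _).mpr (by tauto))
    have hu : ({z, x, b} : Finset (Fin n)) ∪ {a, c} ∪ W = Finset.univ := by
      apply Finset.eq_univ_iff_forall.mpr
      intro t
      simp only [Finset.mem_union, Finset.mem_insert, Finset.mem_singleton, hmemW]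
      by_cases ht : t ∈ S
      · rw [hmemS] at ht; tauto
      · by_cases htz : t = z <;> tauto
    have hum := hf.2 _ _ _ hd1 hd2 hd3 hu
    rw [hWval] at hum
    have h1 := hsmall _ hcard_zxb
    have h2 := hsmall _ hcard_ac
    have h3 := hle2 ({z, x, b} : Finset (Fin n))
    have h4 := hle2 ({a, c} : Finset (Fin n))
    unfold HasUniqueMax at hum
    omega
  -- Step 6: contradiction via ({x,b}, {a,c}, Sᶜ)
  have hd1 : Disjoint ({x, b} : Finset (Fin n)) {a, c} := by
    rw [Finset.disjoint_left]
    intro t ht hm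
    simp only [Finset.mem_insert, Finset.mem_singleton] at ht hm
    rcases ht with rfl | rfl <;> rcases hm with rfl | rfl <;> simp_all
  have hd2 : Disjoint ({x, b} : Finset (Fin n)) Sᶜ := by
    simp only [Finset.disjoint_left, Finset.mem_insert, Finset.mem_singleton,
      Finset.mem_compl, not_not]
    rintro t (rfl | rfl) <;> rw [hmemS] <;> tauto
  have hd3 : Disjoint ({a, c} : Finset (Fin n)) Sᶜ := by
    simp only [Finset.disjoint_left, Finset.mem_insert, Finset.mem_singleton,
      Finset.mem_compl, not_not]
    rintro t (rfl | rfl) <;> rw [hmemS] <;> tauto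
  have hu : ({x, b} : Finset (Fin n)) ∪ {a, c} ∪ Sᶜ = Finset.univ := by
    apply Finset.eq_univ_iff_forall.mpr
    intro t
    simp only [Finset.mem_union, Finset.mem_insert, Finset.mem_singleton, Finset.mem_compl]
    by_cases ht : t ∈ S
    · rw [hmemS] at ht; tauto
    · tauto
  have hum := hf.2 _ _ _ hd1 hd2 hd3 hu
  rw [hxb0, hac0, hstep2.2] at hum
  unfold HasUniqueMax at hum
  omega
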